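/- For every t = 0,…,T−2 and every grid point z_m ∈ Z_θ with z_m ≤ I_t, one has H_t(z_m) ≥ H_t(I_t). -/

import Mathlib

open MeasureTheory Filter Set

theorem stmt3
    (T : ℕ) (hT : 2 ≤ T)
    (α : ℝ) (hα0 : 0 < α) (hα1 : α ≤ 1)
    (K : ℕ → ℝ) (hK0 : ∀ t, t < T → 0 ≤ K t)
    (hKmono : ∀ t, t + 2 ≤ T → α * K (t + 1) ≤ K t)
    (ν : ℕ → MeasureTheory.Measure ℝ)
    (hprob : ∀ t, MeasureTheory.IsProbabilityMeasure (ν t))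
    (hpos : ∀ t, ν t (Set.Iio 0) = 0)
    (F : ℕ → ℝ → ℝ) (hF : ∀ t x, F t x = (ν t (Set.Iic x)).toReal)
    (C : ℕ → ℝ → ℝ)
    (hCconv : ∀ t, t < T → ConvexOn ℝ Set.univ (C t))
    (hCcoer : ∀ t, t < T → Filter.Tendsto (C t) (Filter.cocompact ℝ) Filter.atTop)
    (θ : ℝ) (hθ : 0 < θ)
    (f : ℕ → ℤ → ℝ)
    (hf : ∀ t (n : ℤ), f t n = F t (((n : ℝ) + 1) * θ) - F t ((n : ℝ) * θ))
    (Cm SU : ℕ → ℝ)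
    (hCm : ∀ t, t < T → IsLeast {x | ∀ y, C t x ≤ C t y} (Cm t))
    (hSU : ∀ t, t < T → ∀ n0 : ℤ, (n0 : ℝ) * θ < Cm t → Cm t ≤ ((n0 : ℝ) + 1) * θ →
      IsLeast {w | (∃ m : ℤ, w = (m : ℝ) * θ) ∧ Cm t ≤ w ∧ C t ((n0 : ℝ) * θ) + K t < C t w} (SU t))
    (s S : ℕ → ℝ) (I Ibar : ℕ → ℝ)
    (hsT1a : s (T - 1) ≤ Cm (T - 1))
    (hsT1b : C (T - 1) (s (T - 1)) = C (T - 1) (Cm (T - 1)) + K (T - 1))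
    (hIbarT1 : Ibar (T - 1) = s (T - 1))
    (hI : ∀ t, t + 2 ≤ T →
      IsGreatest {w | (∃ m : ℤ, w = (m : ℝ) * θ) ∧ w < min (Ibar (t + 1) - θ) (Cm t)} (I t))
    (hIbar : ∀ t, t + 2 ≤ T →
      IsGreatest {w | (∃ m : ℤ, w = (m : ℝ) * θ) ∧ w ≤ I t ∧ C t (I t) + K t < C t w} (Ibar t - θ))
    (H V : ℕ → ℝ → ℝ)
    (hHT1 : ∀ y, H (T - 1) y = C (T - 1) y)
    (hST1 : S (T - 1) = Cm (T - 1))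
    (hV : ∀ t, t < T → ∀ y, V t y = if y < s t then H t (S t) + K t else H t y)
    (hHrec : ∀ t, t + 2 ≤ T → ∀ y,
      H t y = C t y + α * ∑' n : ℕ, V (t + 1) (y - ((n : ℝ) - 1) * θ) * f t ((n : ℤ) - 1))
    (hSdef : ∀ t, t + 2 ≤ T →
      IsGreatest {w | (∃ m : ℤ, w = (m : ℝ) * θ) ∧ I t ≤ w ∧ w ≤ SU t ∧
        ∀ u, (∃ n : ℤ, u = (n : ℝ) * θ) → I t ≤ u → u ≤ SU t → H t w ≤ H t u} (S t))
    (hsdef0 : ∀ t, t + 2 ≤ T → K t = 0 → s t = S t)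
    (hsdef1 : ∀ t, t + 2 ≤ T → 0 < K t →
      IsLeast {w | (∃ m : ℤ, w = (m : ℝ) * θ) ∧ Ibar t ≤ w ∧ w ≤ S t ∧ H t w ≤ H t (S t) + K t} (s t))
    :
    ∀ t, t + 2 ≤ T → ∀ m : ℤ, (m : ℝ) * θ ≤ I t → H t (I t) ≤ H t ((m : ℝ) * θ) := by

  intro t ht m hm
  have htT : t + 1 < T := by omega
  obtain ⟨⟨mI, hImI⟩, hIlt⟩ := (hI t ht).1
  have hIlt1 : I t < Ibar (t+1) - θ := lt_of_lt_of_le hIlt (min_le_left _ _)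
  have hIlt2 : I t < Cm t := lt_of_lt_of_le hIlt (min_le_right _ _)
  -- Ibar (t+1) ≤ s (t+1)
  have hIbs : Ibar (t+1) ≤ s (t+1) := by
    rcases eq_or_lt_of_le ht with hEq | hLt
    · have hT1 : T - 1 = t + 1 := by omega
      rw [hT1] at hIbarT1
      exact le_of_eq hIbarT1
    · have ht1 : t + 1 + 2 ≤ T := by omega
      rcases lt_or_eq_of_le (hK0 (t+1) (by omega)) with hKpos | hKz
      · exact ((hsdef1 (t+1) ht1 hKpos).1).2.1
      · have hs := hsdef0 (t+1) ht1 hKz.symm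
        obtain ⟨⟨mb, hmb⟩, hle, hC⟩ := (hIbar (t+1) ht1).1
        have hne : Ibar (t+1) - θ ≠ I (t+1) := by
          intro h
          rw [h] at hC
          have := hK0 (t+1) (by omega : t+1 < T)
          linarith
        have hlt : Ibar (t+1) - θ < I (t+1) := lt_of_le_of_ne hle hne
        obtain ⟨mI1, hI1⟩ := ((hI (t+1) ht1).1).1
        have hmblt : (mb : ℝ) * θ < (mI1 : ℝ) * θ := by rw [← hmb, ← hI1]; exact hlt
        have hmbint : mb < mI1 := by
          have := (mul_lt_mul_iff_of_pos_right hθ).1 hmblt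
          exact_mod_cast this
        have hIb_le : Ibar (t+1) ≤ I (t+1) := by
          have h1 : ((mb : ℝ) + 1) * θ ≤ (mI1 : ℝ) * θ := by
            apply mul_le_mul_of_nonneg_right _ (le_of_lt hθ)
            have : (mb : ℝ) + 1 ≤ (mI1 : ℝ) := by exact_mod_cast hmbint
            exact this
          have h2 : Ibar (t+1) = ((mb : ℝ) + 1) * θ := by
            have : Ibar (t+1) - θ = (mb : ℝ) * θ := hmb
            ring_nf
            ring_nf at this
            linarith
          rw [h2, hI1]; exact h1
        have hIS : I (t+1) ≤ S (t+1) := ((hSdef (t+1) ht1).1).2.1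
        rw [hs]
        linarith
  -- V is constant below s (t+1)
  have key : ∀ y, y ≤ I t → ∀ n : ℕ,
      V (t+1) (y - ((n : ℝ) - 1) * θ) = H (t+1) (S (t+1)) + K (t+1) := by
    intro y hy n
    rw [hV (t+1) htT]
    rw [if_pos]
    have hn : (0 : ℝ) ≤ (n : ℝ) := Nat.cast_nonneg n
    nlinarith
  have hHeq : ∀ y, y ≤ I t →
      H t y = C t y + α * ∑' n : ℕ, (H (t+1) (S (t+1)) + K (t+1)) * f t ((n : ℤ) - 1) := by
    intro y hy
    rw [hHrec t ht y]
    congr 2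
    exact tsum_congr fun n => by rw [key y hy n]
  have h1 := hHeq _ (le_refl (I t))
  have h2 := hHeq _ hm
  -- convexity: C t (I t) ≤ C t (m θ)
  have hconv := hCconv t (by omega)
  have hCmin := (hCm t (by omega)).1
  have hseg : I t ∈ segment ℝ ((m : ℝ) * θ) (Cm t) := by
    rw [segment_eq_Icc (hm.trans hIlt2.le)]
    exact ⟨hm, hIlt2.le⟩
  have hle := hconv.le_on_segment (Set.mem_univ _) (Set.mem_univ _) hseg
  have hmax : max (C t ((m : ℝ) * θ)) (C t (Cm t)) = C t ((m : ℝ) * θ) :=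
    max_eq_left (hCmin _)
  rw [hmax] at hle
  rw [h1, h2]
  linarith
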